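/- (The Schwartz space of tempered distributions is not a Våge space) There do not exist a natural number d ≥ 1 and a function B : ℕ → ℝ with B(k) > 0 for all k, such that for all p, q ∈ ℕ with p ≥ q + d and all sequences f, g : ℕ → ℂ with ∑_m |f_m|² (m+1)^{−2q} < ∞ and ∑_n |g_n|² (n+1)^{−2p} < ∞ one has ∑_n |∑_{m=0}^{n} f_m g_{n−m}|² (n+1)^{−2p} ≤ B(p−q)² · (∑_m |f_m|² (m+1)^{−2q}) · (∑_n |g_n|² (n+1)^{−2p}). -/

import Mathlib

open scoped ENNReal

/-- (The Schwartz space of tempered distributions is not a Våge space.)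
There are no `d ≥ 1` and positive constants `B k` such that
`‖f * g‖_p ≤ B (p - q) ⬝ ‖f‖_q ⬝ ‖g‖_p` (in squared form) holds for the weights
`a n = (n+1)²` whenever `p ≥ q + d`. -/
theorem schwartz_not_vage :
    ¬ ∃ (d : ℕ), 1 ≤ d ∧ ∃ B : ℕ → ℝ, (∀ k, 0 < B k) ∧
      ∀ p q : ℕ, q + d ≤ p → ∀ f g : ℕ → ℂ,
        (∑' m : ℕ, ENNReal.ofReal (‖f m‖ ^ 2 / ((m : ℝ) + 1) ^ (2 * q))) < ⊤ →
        (∑' n : ℕ, ENNReal.ofReal (‖g n‖ ^ 2 / ((n : ℝ) + 1) ^ (2 * p))) < ⊤ →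
        (∑' n : ℕ, ENNReal.ofReal
            (‖∑ m ∈ Finset.range (n + 1), f m * g (n - m)‖ ^ 2 / ((n : ℝ) + 1) ^ (2 * p)))
          ≤ ENNReal.ofReal ((B (p - q)) ^ 2)
              * (∑' m : ℕ, ENNReal.ofReal (‖f m‖ ^ 2 / ((m : ℝ) + 1) ^ (2 * q)))
              * (∑' n : ℕ, ENNReal.ofReal (‖g n‖ ^ 2 / ((n : ℝ) + 1) ^ (2 * p))) := by
  rintro ⟨d, hd, B, hB, h⟩
  set p := d + 1 with hp
  obtain ⟨N, hN⟩ := exists_nat_gt ((B d) ^ 2 * 4 ^ p)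
  set f : ℕ → ℂ := fun m => if m = N then 1 else 0 with hf
  -- the single-point sums
  have hsum : ∀ r : ℕ, (∑' m : ℕ, ENNReal.ofReal (‖f m‖ ^ 2 / ((m : ℝ) + 1) ^ (2 * r)))
      = ENNReal.ofReal (1 / ((N : ℝ) + 1) ^ (2 * r)) := by
    intro r
    rw [tsum_eq_single N]
    · simp [hf]
    · intro m hm; simp [hf, hm]
  -- the convolution
  have hconv : ∀ n : ℕ, (∑ m ∈ Finset.range (n + 1), f m * f (n - m))
      = if n = 2 * N then 1 else 0 := by
    intro n
    by_cases hn : n = 2 * N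
    · subst hn
      rw [Finset.sum_eq_single N]
      · have : 2 * N - N = N := by omega
        simp [hf, this]
      · intro m _ hmN; simp [hf, hmN]
      · intro hN'
        exact absurd (Finset.mem_range.2 (by omega)) hN'
    · rw [if_neg hn]
      apply Finset.sum_eq_zero
      intro m hm
      by_cases hmN : m = N
      · subst hmN
        have hle := Finset.mem_range.1 hm
        have hne : n - m ≠ m := by omega
        simp [hf, hne]
      · simp [hf, hmN]
  have hconvsum : (∑' n : ℕ, ENNReal.ofReal
      (‖∑ m ∈ Finset.range (n + 1), f m * f (n - m)‖ ^ 2 / ((n : ℝ) + 1) ^ (2 * p)))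
      = ENNReal.ofReal (1 / (2 * (N : ℝ) + 1) ^ (2 * p)) := by
    rw [tsum_eq_single (2 * N)]
    · rw [hconv, if_pos rfl]
      have h1 : ‖(1 : ℂ)‖ ^ 2 = 1 := by norm_num
      rw [h1]
      congr 1
      push_cast
      ring
    · intro n hn
      rw [hconv, if_neg hn]
      simp
  have key := h p 1 (by omega) f f (by rw [hsum]; exact ENNReal.ofReal_lt_top)
    (by rw [hsum]; exact ENNReal.ofReal_lt_top)
  rw [hconvsum, hsum, hsum] at key
  have hpq : p - 1 = d := by omega
  rw [hpq, ← ENNReal.ofReal_mul (by positivity), ← ENNReal.ofReal_mul (by positivity)] at key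
  have hreal : 1 / (2 * (N : ℝ) + 1) ^ (2 * p)
      ≤ (B d) ^ 2 * (1 / ((N : ℝ) + 1) ^ (2 * 1)) * (1 / ((N : ℝ) + 1) ^ (2 * p)) :=
    (ENNReal.ofReal_le_ofReal_iff (by positivity)).1 key
  set x : ℝ := (N : ℝ) + 1 with hx
  have hN0 : (0 : ℝ) ≤ (N : ℝ) := Nat.cast_nonneg N
  have hx1 : (1 : ℝ) ≤ x := by rw [hx]; linarith
  have hxpos : (0 : ℝ) < x := by linarith
  have hA : (0 : ℝ) < x ^ (2 * p) := by positivity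
  have hC : (0 : ℝ) < (2 * (N : ℝ) + 1) ^ (2 * p) := by positivity
  have hrw : (B d) ^ 2 * (1 / x ^ (2 * 1)) * (1 / x ^ (2 * p))
      = (B d) ^ 2 / (x ^ (2 * 1) * x ^ (2 * p)) := by
    field_simp
  rw [hrw, div_le_div_iff₀ hC (by positivity)] at hreal
  -- hreal : 1 * (x^2 * x^(2p)) ≤ B² * (2N+1)^(2p)
  have hCA : (2 * (N : ℝ) + 1) ^ (2 * p) ≤ 4 ^ p * x ^ (2 * p) := by
    have h2 : (2 * (N : ℝ) + 1) ≤ 2 * x := by rw [hx]; linarith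
    calc (2 * (N : ℝ) + 1) ^ (2 * p) ≤ (2 * x) ^ (2 * p) :=
          pow_le_pow_left₀ (by positivity) h2 _
      _ = 4 ^ p * x ^ (2 * p) := by
          rw [mul_pow, pow_mul]; norm_num
  have hB2 : (0 : ℝ) < (B d) ^ 2 := pow_pos (hB d) 2
  have h1 : x ^ 2 * x ^ (2 * p) ≤ (B d) ^ 2 * (4 ^ p * x ^ (2 * p)) := by
    calc x ^ 2 * x ^ (2 * p) = 1 * (x ^ (2 * 1) * x ^ (2 * p)) := by ring
      _ ≤ (B d) ^ 2 * (2 * (N : ℝ) + 1) ^ (2 * p) := hreal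
      _ ≤ (B d) ^ 2 * (4 ^ p * x ^ (2 * p)) := by
          exact mul_le_mul_of_nonneg_left hCA (le_of_lt hB2)
  have h2 : x ^ 2 ≤ (B d) ^ 2 * 4 ^ p := by
    have := le_of_mul_le_mul_right (by linarith [h1] : x ^ 2 * x ^ (2 * p) ≤ ((B d) ^ 2 * 4 ^ p) * x ^ (2 * p)) hA
    linarith
  have hNx : (B d) ^ 2 * 4 ^ p < x := by
    have : ((N : ℝ)) < x := by rw [hx]; linarith
    linarith
  nlinarith [h2, hNx, hx1]
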